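/- Let Q ∈ ℝ^{n×n} be diagonal positive definite, let S ∈ ℝ^{r×n} have full row rank with r < n, let W_b ∈ ℝ^{r×m}, let T_x ∈ ℝ^{n×n} and T_ν ∈ ℝ^{r×r} be diagonal positive definite, and let t_c, t_b ≥ 0. Define A = [[−T_x⁻¹Q, −T_x⁻¹Sᵀ], [T_ν⁻¹S, 0]], B = [[t_c T_x⁻¹, 0], [0, t_b T_ν⁻¹ W_b]], and C = [Q^{1/2}, 0]. Then the unique symmetric solution X of the Lyapunov equation AᵀX + XA + CᵀC = 0 satisfies Tr(BᵀXB) = (t_c²/2)·Tr(T_x⁻¹) + (t_b²/2)·Tr(W_bᵀ T_ν⁻¹ W_b). In particular, the squared H₂ norm of the input-output saddle-point dynamics equals this expression and is independent of Q and S. -/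

import Mathlib

open Matrix

section
open scoped ComplexOrder

/-- The square root of a positive semidefinite matrix, as defined in Mathlib (Dec 2024). -/
noncomputable def Matrix.PosSemidef.sqrt {n 𝕜 : Type*} [Fintype n] [DecidableEq n] [RCLike 𝕜]
    {A : Matrix n n 𝕜} (hA : A.PosSemidef) : Matrix n n 𝕜 :=
  hA.1.eigenvectorUnitary.1 * diagonal ((↑) ∘ (√·) ∘ hA.1.eigenvalues) *
    (star hA.1.eigenvectorUnitary : Matrix n n 𝕜)

end

namespace SaddleH2Aux

open Complex

lemma trace_fromBlocks {R : Type*} [AddCommMonoid R] {k l : Type*} [Fintype k] [Fintype l]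
    (A : Matrix k k R) (B : Matrix k l R) (C : Matrix l k R) (D : Matrix l l R) :
    (Matrix.fromBlocks A B C D).trace = A.trace + D.trace := by
  simp [Matrix.trace, Matrix.diag, Fintype.sum_sum_type]

lemma conj_quad {k : Type*} [Fintype k] (M : Matrix k k ℝ) (v : k → ℂ) :
    starRingEnd ℂ (star v ⬝ᵥ ((M.map Complex.ofRealHom) *ᵥ v))
      = star v ⬝ᵥ ((Mᵀ.map Complex.ofRealHom) *ᵥ v) := by
  simp only [dotProduct, mulVec, Finset.mul_sum, map_sum, Pi.star_apply,
    Matrix.map_apply, Matrix.transpose_apply, Complex.ofRealHom_eq_coe,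
    RCLike.star_def]
  rw [Finset.sum_comm]
  refine Finset.sum_congr rfl fun j _ => Finset.sum_congr rfl fun i _ => by
    simp only [_root_.map_mul, Complex.conj_conj, Complex.conj_ofReal]; ring

lemma diag_quad {k : Type*} [Fintype k] (M : Matrix k k ℝ) (hM : M.IsDiag) (v : k → ℂ) :
    star v ⬝ᵥ ((M.map Complex.ofRealHom) *ᵥ v)
      = ((∑ i, M i i * Complex.normSq (v i) : ℝ) : ℂ) := by
  classical
  simp only [dotProduct, mulVec, Pi.star_apply, Matrix.map_apply, Complex.ofRealHom_eq_coe,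
    RCLike.star_def]
  push_cast
  refine Finset.sum_congr rfl fun i _ => ?_
  rw [Finset.sum_eq_single i]
  · rw [Complex.normSq_eq_conj_mul_self]; ring
  · intro j _ hj
    rw [hM (fun h => hj h.symm)]
    simp
  · simp

lemma transpose_mulVec_eq_zero {r n : ℕ} (S : Matrix (Fin r) (Fin n) ℝ) (hS : S.rank = r)
    (x : Fin r → ℝ) (hx : Sᵀ *ᵥ x = 0) : x = 0 := by
  have h1 : (Sᵀ).rank = r := by rw [Matrix.rank_transpose]; exact hS
  have h2 := LinearMap.finrank_range_add_finrank_ker (Sᵀ.mulVecLin)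
  rw [show Module.finrank ℝ (LinearMap.range Sᵀ.mulVecLin) = r from h1,
    show Module.finrank ℝ (Fin r → ℝ) = r by simp] at h2
  have h3 : Module.finrank ℝ (LinearMap.ker Sᵀ.mulVecLin) = 0 := by omega
  have h4 : LinearMap.ker Sᵀ.mulVecLin = ⊥ := Submodule.finrank_eq_zero.mp h3
  have h5 : x ∈ LinearMap.ker Sᵀ.mulVecLin := by
    rw [LinearMap.mem_ker, Matrix.mulVecLin_apply]; exact hx
  rw [h4, Submodule.mem_bot] at h5
  exact h5

end SaddleH2Aux

open SaddleH2Aux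

set_option maxHeartbeats 1600000 in
/-- the unique symmetric solution `X` of the Lyapunov equation
`AᵀX + XA + CᵀC = 0` satisfies
`Tr(BᵀXB) = (t_c²/2)·Tr(Tx⁻¹) + (t_b²/2)·Tr(Wbᵀ Tν⁻¹ Wb)`,
i.e. the squared H₂ norm of the saddle-point dynamics equals this expression. -/
theorem saddle_point_H2_norm
    (n r m : ℕ) (hrn : r < n)
    (Q : Matrix (Fin n) (Fin n) ℝ) (hQd : Q.IsDiag) (hQ : Q.PosDef)
    (S : Matrix (Fin r) (Fin n) ℝ) (hS : S.rank = r)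
    (Wb : Matrix (Fin r) (Fin m) ℝ)
    (Tx : Matrix (Fin n) (Fin n) ℝ) (hTxd : Tx.IsDiag) (hTx : Tx.PosDef)
    (Tν : Matrix (Fin r) (Fin r) ℝ) (hTνd : Tν.IsDiag) (hTν : Tν.PosDef)
    (tc tb : ℝ) (htc : 0 ≤ tc) (htb : 0 ≤ tb)
    (A : Matrix (Fin n ⊕ Fin r) (Fin n ⊕ Fin r) ℝ)
    (hA : A = Matrix.fromBlocks (-(Tx⁻¹ * Q)) (-(Tx⁻¹ * Sᵀ)) (Tν⁻¹ * S) 0)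
    (B : Matrix (Fin n ⊕ Fin r) (Fin n ⊕ Fin m) ℝ)
    (hB : B = Matrix.fromBlocks (tc • Tx⁻¹) 0 0 (tb • (Tν⁻¹ * Wb)))
    (C : Matrix (Fin n) (Fin n ⊕ Fin r) ℝ)
    (hC : C = Matrix.fromCols hQ.posSemidef.sqrt 0) :
    (∃! X : Matrix (Fin n ⊕ Fin r) (Fin n ⊕ Fin r) ℝ,
        X.IsSymm ∧ Aᵀ * X + X * A + Cᵀ * C = 0) ∧
      ∀ X : Matrix (Fin n ⊕ Fin r) (Fin n ⊕ Fin r) ℝ,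
        X.IsSymm → Aᵀ * X + X * A + Cᵀ * C = 0 →
          (Bᵀ * X * B).trace =
            tc ^ 2 / 2 * Tx⁻¹.trace + tb ^ 2 / 2 * (Wbᵀ * Tν⁻¹ * Wb).trace := by
  classical
  have hQs : Qᵀ = Q := hQd.isSymm.eq
  have hTxdet : IsUnit Tx.det := hTx.det_pos.ne'.isUnit
  have hTνdet : IsUnit Tν.det := hTν.det_pos.ne'.isUnit
  have hTxE : Tx * Tx⁻¹ = 1 := Tx.mul_nonsing_inv hTxdet
  have hETx : Tx⁻¹ * Tx = 1 := Tx.nonsing_inv_mul hTxdet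
  have hTνF : Tν * Tν⁻¹ = 1 := Tν.mul_nonsing_inv hTνdet
  have hFTν : Tν⁻¹ * Tν = 1 := Tν.nonsing_inv_mul hTνdet
  have hEd : (Tx⁻¹).IsDiag := by
    rw [← hTxd.diagonal_diag, Matrix.inv_diagonal]
    exact Matrix.isDiag_diagonal _
  have hFd : (Tν⁻¹).IsDiag := by
    rw [← hTνd.diagonal_diag, Matrix.inv_diagonal]
    exact Matrix.isDiag_diagonal _
  have hEs : (Tx⁻¹)ᵀ = Tx⁻¹ := hEd.isSymm.eq
  have hFs : (Tν⁻¹)ᵀ = Tν⁻¹ := hFd.isSymm.eq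
  have hsT : (hQ.posSemidef.sqrt)ᵀ = hQ.posSemidef.sqrt := by
    unfold Matrix.PosSemidef.sqrt
    simp only [Matrix.transpose_mul, Matrix.diagonal_transpose, Unitary.coe_star,
      Matrix.star_eq_conjTranspose, Matrix.conjTranspose_eq_transpose_of_trivial,
      Matrix.transpose_transpose, Matrix.mul_assoc]
  have hss : hQ.posSemidef.sqrt * hQ.posSemidef.sqrt = Q := by
    have hpsd := hQ.posSemidef
    unfold Matrix.PosSemidef.sqrt
    have hU : (star hpsd.1.eigenvectorUnitary : Matrix (Fin n) (Fin n) ℝ)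
        * (hpsd.1.eigenvectorUnitary : Matrix (Fin n) (Fin n) ℝ) = 1 :=
      Unitary.coe_star_mul_self _
    calc _ = (hpsd.1.eigenvectorUnitary : Matrix (Fin n) (Fin n) ℝ)
          * (diagonal (RCLike.ofReal ∘ (√·) ∘ hpsd.1.eigenvalues)
            * ((star hpsd.1.eigenvectorUnitary : Matrix (Fin n) (Fin n) ℝ)
              * (hpsd.1.eigenvectorUnitary : Matrix (Fin n) (Fin n) ℝ))
            * diagonal (RCLike.ofReal ∘ (√·) ∘ hpsd.1.eigenvalues))
          * (star hpsd.1.eigenvectorUnitary : Matrix (Fin n) (Fin n) ℝ) := by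
          simp only [Matrix.mul_assoc]
      _ = (hpsd.1.eigenvectorUnitary : Matrix (Fin n) (Fin n) ℝ)
          * diagonal (RCLike.ofReal ∘ hpsd.1.eigenvalues)
          * (star hpsd.1.eigenvectorUnitary : Matrix (Fin n) (Fin n) ℝ) := by
          rw [hU, Matrix.mul_one, diagonal_mul_diagonal]
          congr 3
          funext i
          simp [Real.mul_self_sqrt (hpsd.eigenvalues_nonneg i)]
      _ = Q := (hpsd.1.spectral_theorem).symm
  have diagpos : ∀ {k : ℕ} (M : Matrix (Fin k) (Fin k) ℝ), M.PosDef → ∀ i, 0 < M i i := by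
    intro k M hM i
    have h1 : (Pi.single i 1 : Fin k → ℝ) ≠ 0 := by
      intro h
      have := congrFun h i
      simp at this
    exact hM.diag_pos
  set X0 : Matrix (Fin n ⊕ Fin r) (Fin n ⊕ Fin r) ℝ :=
    (1/2 : ℝ) • Matrix.fromBlocks Tx 0 0 Tν with hX0def
  have hX0symm : X0.IsSymm := by
    show X0ᵀ = X0
    rw [hX0def, Matrix.transpose_smul, Matrix.fromBlocks_transpose, hTxd.isSymm.eq,
      hTνd.isSymm.eq, Matrix.transpose_zero, Matrix.transpose_zero]
  have hPA : Matrix.fromBlocks Tx 0 0 Tν * A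
      = Matrix.fromBlocks (-Q) (-Sᵀ) S (0 : Matrix (Fin r) (Fin r) ℝ) := by
    rw [hA, Matrix.fromBlocks_multiply]
    simp only [Matrix.mul_neg, ← Matrix.mul_assoc, hTxE, hTνF, Matrix.one_mul,
      Matrix.zero_mul, Matrix.mul_zero, add_zero, zero_add, neg_zero]
  have hX0A : X0 * A = (1/2 : ℝ) • Matrix.fromBlocks (-Q) (-Sᵀ) S 0 := by
    rw [hX0def, Matrix.smul_mul, hPA]
  have hAX0 : Aᵀ * X0 = (1/2 : ℝ) • Matrix.fromBlocks (-Q) Sᵀ (-S) 0 := by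
    have h1 : Aᵀ * X0 = (X0 * A)ᵀ := by rw [Matrix.transpose_mul, hX0symm.eq]
    rw [h1, hX0A, Matrix.transpose_smul, Matrix.fromBlocks_transpose]
    simp [hQs]
  have hCtC : Cᵀ * C = Matrix.fromBlocks Q 0 0 0 := by
    rw [hC, Matrix.transpose_fromCols, Matrix.fromRows_mul_fromCols]
    rw [hsT, hss]
    simp
  have hsol : Aᵀ * X0 + X0 * A + Cᵀ * C = 0 := by
    rw [hAX0, hX0A, hCtC]
    ext i j
    rcases i with i | i <;> rcases j with j | j <;>
      simp [Matrix.fromBlocks] <;> ring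
  -- uniqueness core
  have huniq : ∀ Z : Matrix (Fin n ⊕ Fin r) (Fin n ⊕ Fin r) ℝ,
      Aᵀ * Z + Z * A = 0 → Z = 0 := by
    intro Z hZ
    set φ : ℝ →+* ℂ := Complex.ofRealHom with hφ
    set A' : Matrix (Fin n ⊕ Fin r) (Fin n ⊕ Fin r) ℂ := A.map φ with hA'def
    set Z' : Matrix (Fin n ⊕ Fin r) (Fin n ⊕ Fin r) ℂ := Z.map φ with hZ'def
    have mapadd : ∀ (U V : Matrix (Fin n ⊕ Fin r) (Fin n ⊕ Fin r) ℝ),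
        (U + V).map φ = U.map φ + V.map φ := fun U V => by
      ext i j; simp [Matrix.map_apply]
    have hmapeq : A'ᵀ * Z' + Z' * A' = 0 := by
      have h0 : (Aᵀ * Z + Z * A).map φ = (0 : Matrix (Fin n ⊕ Fin r) (Fin n ⊕ Fin r) ℝ).map φ := by
        rw [hZ]
      rw [mapadd, Matrix.map_mul, Matrix.map_mul, Matrix.transpose_map] at h0
      rw [hA'def, hZ'def]
      rwa [show (0 : Matrix (Fin n ⊕ Fin r) (Fin n ⊕ Fin r) ℝ).map φ = 0 from by
        ext i j; simp] at h0
    have hintertwine : Z' * A' = -(A'ᵀ * Z') := by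
      have := hmapeq
      linear_combination (norm := abel) this
    -- Hurwitz property
    have hur : ∀ (μ : ℂ) (v : (Fin n ⊕ Fin r) → ℂ), v ≠ 0 → A' *ᵥ v = μ • v → μ.re < 0 := by
      intro μ v hv hev
      have hPdiag : (Matrix.fromBlocks Tx 0 0 Tν).IsDiag := hTxd.fromBlocks hTνd
      have hHdiag : (Matrix.fromBlocks Q 0 0 (0 : Matrix (Fin r) (Fin r) ℝ)).IsDiag :=
        hQd.fromBlocks Matrix.isDiag_zero
      have hHK : (Matrix.fromBlocks (-Q) (-Sᵀ) S (0 : Matrix (Fin r) (Fin r) ℝ))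
          = -(Matrix.fromBlocks Q 0 0 0) + Matrix.fromBlocks 0 (-Sᵀ) S 0 := by
        ext i j
        rcases i with i | i <;> rcases j with j | j <;> simp [Matrix.fromBlocks]
      -- multiply the eigen-equation by P
      have h3 : ((Matrix.fromBlocks (-Q) (-Sᵀ) S (0 : Matrix (Fin r) (Fin r) ℝ)).map φ) *ᵥ v
          = μ • (((Matrix.fromBlocks Tx 0 0 Tν).map φ) *ᵥ v) := by
        rw [← hPA, Matrix.map_mul, ← Matrix.mulVec_mulVec, ← hA'def, hev, Matrix.mulVec_smul]
      have hsplitmap : (Matrix.fromBlocks (-Q) (-Sᵀ) S (0 : Matrix (Fin r) (Fin r) ℝ)).map φ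
          = -((Matrix.fromBlocks Q 0 0 0).map φ)
            + (Matrix.fromBlocks 0 (-Sᵀ) S (0 : Matrix (Fin r) (Fin r) ℝ)).map φ := by
        rw [hHK]; ext i j; simp [Matrix.map_apply]
      set pr : ℝ := ∑ i, (Matrix.fromBlocks Tx 0 0 Tν) i i * Complex.normSq (v i) with hprdef
      set hr : ℝ := ∑ i, (Matrix.fromBlocks Q 0 0 (0 : Matrix (Fin r) (Fin r) ℝ)) i i
        * Complex.normSq (v i) with hhrdef
      have hp : star v ⬝ᵥ (((Matrix.fromBlocks Tx 0 0 Tν).map φ) *ᵥ v) = (pr : ℂ) :=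
        diag_quad _ hPdiag v
      have hh : star v ⬝ᵥ (((Matrix.fromBlocks Q 0 0 (0 : Matrix (Fin r) (Fin r) ℝ)).map φ) *ᵥ v)
          = (hr : ℂ) := diag_quad _ hHdiag v
      set κ : ℂ := star v ⬝ᵥ (((Matrix.fromBlocks 0 (-Sᵀ) S (0 : Matrix (Fin r) (Fin r) ℝ)).map φ)
        *ᵥ v) with hκdef
      have hκre : κ.re = 0 := by
        have hKskew : (Matrix.fromBlocks 0 (-Sᵀ) S (0 : Matrix (Fin r) (Fin r) ℝ))ᵀ
            = -(Matrix.fromBlocks 0 (-Sᵀ) S 0) := by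
          ext i j
          rcases i with i | i <;> rcases j with j | j <;> simp [Matrix.fromBlocks]
        have hc := conj_quad (Matrix.fromBlocks 0 (-Sᵀ) S (0 : Matrix (Fin r) (Fin r) ℝ)) v
        rw [hKskew] at hc
        have hneg : ((-(Matrix.fromBlocks 0 (-Sᵀ) S (0 : Matrix (Fin r) (Fin r) ℝ))).map φ) *ᵥ v
            = -(((Matrix.fromBlocks 0 (-Sᵀ) S (0 : Matrix (Fin r) (Fin r) ℝ)).map φ) *ᵥ v) := by
          rw [show (-(Matrix.fromBlocks 0 (-Sᵀ) S (0 : Matrix (Fin r) (Fin r) ℝ))).map φ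
            = -((Matrix.fromBlocks 0 (-Sᵀ) S (0 : Matrix (Fin r) (Fin r) ℝ)).map φ) from by
              ext i j; simp [Matrix.map_apply], Matrix.neg_mulVec]
        rw [hneg, dotProduct_neg] at hc
        have : (starRingEnd ℂ) κ = -κ := hc
        have h5 := congrArg Complex.re this
        simp only [Complex.conj_re, Complex.neg_re] at h5
        linarith
      -- take the quadratic form
      have heq : -(hr : ℂ) + κ = μ * (pr : ℂ) := by
        have h6 := congrArg (fun w => star v ⬝ᵥ w) h3
        rw [hsplitmap, Matrix.add_mulVec, Matrix.neg_mulVec, dotProduct_add,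
          dotProduct_neg, hh, dotProduct_smul, hp, smul_eq_mul] at h6
        exact h6
      have hre : μ.re * pr = -hr := by
        have h7 := congrArg Complex.re heq
        simp only [Complex.add_re, Complex.neg_re, Complex.ofReal_re, Complex.mul_re,
          Complex.ofReal_im, hκre, mul_zero, sub_zero, add_zero] at h7
        linarith
      have hprpos : 0 < pr := by
        rw [hprdef]
        have hex : ∃ i, v i ≠ 0 := by
          by_contra hc
          push_neg at hc
          exact hv (funext hc)
        obtain ⟨i0, hi0⟩ := hex
        have hdiagP : ∀ i, 0 < (Matrix.fromBlocks Tx 0 0 Tν) i i := by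
          intro i
          rcases i with i | i
          · simpa using diagpos Tx hTx i
          · simpa using diagpos Tν hTν i
        refine Finset.sum_pos' (fun i _ => ?_) ⟨i0, Finset.mem_univ i0, ?_⟩
        · exact mul_nonneg (hdiagP i).le (Complex.normSq_nonneg _)
        · exact mul_pos (hdiagP i0) (by simpa [Complex.normSq_pos] using hi0)
      have hrnn : ∀ i ∈ Finset.univ, 0 ≤ (Matrix.fromBlocks Q 0 0 (0 : Matrix (Fin r) (Fin r) ℝ)) i i
          * Complex.normSq (v i) := by
        intro i _
        rcases i with i | i
        · exact mul_nonneg (by simpa using (diagpos Q hQ i).le) (Complex.normSq_nonneg _)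
        · simp
      have hrge : 0 ≤ hr := Finset.sum_nonneg hrnn
      rcases eq_or_lt_of_le hrge with hzero | hpos
      · -- hr = 0 : contradiction, v must be 0
        exfalso
        have hterms := (Finset.sum_eq_zero_iff_of_nonneg hrnn).mp hzero.symm
        have hv1 : ∀ i : Fin n, v (Sum.inl i) = 0 := by
          intro i
          have ht := hterms (Sum.inl i) (Finset.mem_univ _)
          simp only [Matrix.fromBlocks_apply₁₁] at ht
          have : Complex.normSq (v (Sum.inl i)) = 0 := by
            rcases mul_eq_zero.mp ht with h | h
            · exact absurd h (diagpos Q hQ i).ne'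
            · exact h
          exact Complex.normSq_eq_zero.mp this
        -- from the eigen-equation: Sᵀ annihilates the inr part of v
        have hw : ∀ i : Fin n, ∑ j : Fin r, (S j i : ℂ) * v (Sum.inr j) = 0 := by
          intro i
          have h8 := congrFun h3 (Sum.inl i)
          simp only [Matrix.mulVec, dotProduct, Fintype.sum_sum_type, Matrix.map_apply,
            Matrix.fromBlocks_apply₁₁, Matrix.fromBlocks_apply₁₂, Pi.smul_apply, smul_eq_mul,
            Matrix.neg_apply, Matrix.transpose_apply, Matrix.zero_apply, hv1, mul_zero,
            Finset.sum_const_zero, add_zero, zero_add] at h8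
          simp only [hφ, Complex.ofRealHom_eq_coe, Complex.ofReal_neg, Complex.ofReal_zero,
            neg_mul, zero_mul, mul_zero, Finset.sum_const_zero, Finset.sum_neg_distrib] at h8
          rw [← neg_eq_zero]
          exact h8
        have hv2 : ∀ j : Fin r, v (Sum.inr j) = 0 := by
          have ha : (Sᵀ *ᵥ fun j => (v (Sum.inr j)).re) = 0 := by
            funext i
            have h9 := congrArg Complex.re (hw i)
            simpa [Matrix.mulVec, dotProduct, Complex.re_sum, Complex.mul_re] using h9
          have hb : (Sᵀ *ᵥ fun j => (v (Sum.inr j)).im) = 0 := by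
            funext i
            have h9 := congrArg Complex.im (hw i)
            simpa [Matrix.mulVec, dotProduct, Complex.im_sum, Complex.mul_im] using h9
          have ha0 := transpose_mulVec_eq_zero S hS _ ha
          have hb0 := transpose_mulVec_eq_zero S hS _ hb
          intro j
          have h10 := congrFun ha0 j
          have h11 := congrFun hb0 j
          simp only [Pi.zero_apply] at h10 h11
          exact Complex.ext h10 h11
        apply hv
        funext i
        rcases i with i | i
        · exact hv1 i
        · exact hv2 i
      · -- hr > 0 gives μ.re < 0
        nlinarith [hre, hprpos, hpos]
    -- generalized eigenspace argument: Z' kills every vector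
    have hZ'v : ∀ v : (Fin n ⊕ Fin r) → ℂ, Z' *ᵥ v = 0 := by
      have hspan := Module.End.iSup_maxGenEigenspace_eq_top (Matrix.mulVecLin A')
      have hle : (⨆ μ : ℂ, Module.End.maxGenEigenspace (Matrix.mulVecLin A') μ)
          ≤ LinearMap.ker Z'.mulVecLin := by
        refine iSup_le fun μ u hu => ?_
        rw [LinearMap.mem_ker, Matrix.mulVecLin_apply]
        obtain ⟨k, hk⟩ := (Module.End.mem_maxGenEigenspace _ _ _).mp hu
        have hrel : ∀ (j : ℕ) (w : (Fin n ⊕ Fin r) → ℂ),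
            ((Matrix.mulVecLin A' - μ • 1) ^ j) w = ((A' - μ • 1) ^ j) *ᵥ w := by
          intro j
          induction j with
          | zero => intro w; simp [Matrix.one_mulVec]
          | succ j ih =>
            intro w
            rw [pow_succ, pow_succ, Module.End.mul_apply]
            have hfw : (Matrix.mulVecLin A' - μ • 1) w = (A' - μ • 1) *ᵥ w := by
              simp [Matrix.sub_mulVec, Matrix.mulVecLin_apply, Matrix.smul_mulVec,
                Matrix.one_mulVec]
            rw [hfw, ih, Matrix.mulVec_mulVec]
        have hk' : ((A' - μ • 1) ^ k) *ᵥ u = 0 := by rw [← hrel k u]; exact hk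
        by_cases hdet : (A' - μ • (1 : Matrix (Fin n ⊕ Fin r) (Fin n ⊕ Fin r) ℂ)).det = 0
        · -- μ is an eigenvalue of A', so μ.re < 0
          obtain ⟨w, hw0, hww⟩ := Matrix.exists_mulVec_eq_zero_iff.mpr hdet
          have hμ : μ.re < 0 := by
            apply hur μ w hw0
            rw [Matrix.sub_mulVec, Matrix.smul_mulVec, Matrix.one_mulVec,
              sub_eq_zero] at hww
            exact hww
          have hdet2 : (-(A'ᵀ) - μ • (1 : Matrix (Fin n ⊕ Fin r) (Fin n ⊕ Fin r) ℂ)).det ≠ 0 := by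
            intro hc
            have htr : ((-(A'ᵀ) - μ • (1 : Matrix (Fin n ⊕ Fin r) (Fin n ⊕ Fin r) ℂ)))ᵀ
                = -A' - μ • 1 := by
              rw [Matrix.transpose_sub, Matrix.transpose_neg, Matrix.transpose_transpose,
                Matrix.transpose_smul, Matrix.transpose_one]
            have hc2 : (-A' - μ • (1 : Matrix (Fin n ⊕ Fin r) (Fin n ⊕ Fin r) ℂ)).det = 0 := by
              rw [← htr, Matrix.det_transpose]
              exact hc
            obtain ⟨w2, hw20, hw2⟩ := Matrix.exists_mulVec_eq_zero_iff.mpr hc2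
            have hev2 : A' *ᵥ w2 = (-μ) • w2 := by
              rw [Matrix.sub_mulVec, Matrix.neg_mulVec, Matrix.smul_mulVec,
                Matrix.one_mulVec, sub_eq_zero] at hw2
              have := congrArg Neg.neg hw2
              rw [neg_neg] at this
              rw [this, neg_smul]
            have := hur (-μ) w2 hw20 hev2
            simp only [Complex.neg_re] at this
            linarith
          -- intertwining relation
          have hZP : Z' * (A' - μ • 1) = (-(A'ᵀ) - μ • 1) * Z' := by
            rw [Matrix.mul_sub, Matrix.sub_mul, hintertwine, Matrix.mul_smul, Matrix.mul_one,
              Matrix.smul_mul, Matrix.one_mul, Matrix.neg_mul]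
          have hint : ∀ j : ℕ, Z' * ((A' - μ • 1) ^ j) = ((-(A'ᵀ) - μ • 1) ^ j) * Z' := by
            intro j
            induction j with
            | zero => simp
            | succ j ih =>
              rw [pow_succ, pow_succ, ← Matrix.mul_assoc, ih, Matrix.mul_assoc, hZP,
                ← Matrix.mul_assoc]
          have h14 : ((-(A'ᵀ) - μ • 1) ^ k) *ᵥ (Z' *ᵥ u) = 0 := by
            rw [Matrix.mulVec_mulVec, ← hint k, ← Matrix.mulVec_mulVec, hk',
              Matrix.mulVec_zero]
          have hdetk : IsUnit (((-(A'ᵀ) - μ • (1 : Matrix (Fin n ⊕ Fin r) (Fin n ⊕ Fin r) ℂ)) ^ k).det) := by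
            rw [Matrix.det_pow]
            exact (Ne.isUnit hdet2).pow k
          have h17 : ((-(A'ᵀ) - μ • 1) ^ k)⁻¹ *ᵥ (((-(A'ᵀ) - μ • 1) ^ k) *ᵥ (Z' *ᵥ u))
              = Z' *ᵥ u := by
            rw [Matrix.mulVec_mulVec, Matrix.nonsing_inv_mul _ hdetk, Matrix.one_mulVec]
          rw [h14, Matrix.mulVec_zero] at h17
          exact h17.symm
        · -- (A' - μ•1) invertible : u = 0
          have hdetk : IsUnit (((A' - μ • (1 : Matrix (Fin n ⊕ Fin r) (Fin n ⊕ Fin r) ℂ)) ^ k).det) := by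
            rw [Matrix.det_pow]
            exact (Ne.isUnit hdet).pow k
          have h16 := congrArg
            (fun w => ((A' - μ • (1 : Matrix (Fin n ⊕ Fin r) (Fin n ⊕ Fin r) ℂ)) ^ k)⁻¹ *ᵥ w) hk'
          have hu0 : u = 0 := by
            simpa [Matrix.mulVec_mulVec, Matrix.nonsing_inv_mul _ hdetk, Matrix.one_mulVec,
              Matrix.mulVec_zero] using h16
          rw [hu0, Matrix.mulVec_zero]
      intro v
      have hvmem : v ∈ (⊤ : Submodule ℂ ((Fin n ⊕ Fin r) → ℂ)) := Submodule.mem_top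
      rw [← hspan] at hvmem
      have := hle hvmem
      rwa [LinearMap.mem_ker, Matrix.mulVecLin_apply] at this
    have hZ'0 : Z' = 0 := by
      ext i j
      have h12 := congrFun (hZ'v (Pi.single j 1)) i
      simpa [Matrix.mulVec_single] using h12
    ext i j
    have h13 : Z' i j = 0 := by rw [hZ'0]; rfl
    rw [hZ'def] at h13
    simp only [Matrix.map_apply, hφ, Complex.ofRealHom_eq_coe, Complex.ofReal_eq_zero] at h13
    simpa using h13
  have uniqcore : ∀ X : Matrix (Fin n ⊕ Fin r) (Fin n ⊕ Fin r) ℝ,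
      Aᵀ * X + X * A + Cᵀ * C = 0 → X = X0 := by
    intro X hXe
    have h1 : Aᵀ * (X - X0) + (X - X0) * A = 0 := by
      have h2 : Aᵀ * (X - X0) + (X - X0) * A
          = (Aᵀ * X + X * A + Cᵀ * C) - (Aᵀ * X0 + X0 * A + Cᵀ * C) := by
        rw [Matrix.mul_sub, Matrix.sub_mul]
        abel
      rw [h2, hXe, hsol, sub_zero]
    have h3 := huniq _ h1
    have h4 : X - X0 = 0 := h3
    linear_combination (norm := abel) h4
  refine ⟨⟨X0, ⟨hX0symm, hsol⟩, fun Y hY => uniqcore Y hY.2⟩, ?_⟩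
  intro X _ hXe
  rw [uniqcore X hXe]
  -- trace computation
  have hBt : Bᵀ = Matrix.fromBlocks (tc • Tx⁻¹) 0 0 (tb • (Wbᵀ * Tν⁻¹)) := by
    rw [hB, Matrix.fromBlocks_transpose]
    simp [Matrix.transpose_smul, Matrix.transpose_mul, hEs, hFs]
  have hprod : Bᵀ * X0 * B = (1/2 : ℝ) •
      Matrix.fromBlocks ((tc * tc) • Tx⁻¹) 0 0 ((tb * tb) • (Wbᵀ * Tν⁻¹ * Wb)) := by
    have h1 : Bᵀ * X0 = (1/2 : ℝ) • Matrix.fromBlocks (tc • 1) 0 0 (tb • Wbᵀ) := by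
      rw [hBt, hX0def, Matrix.mul_smul, Matrix.fromBlocks_multiply]
      simp only [Matrix.smul_mul, Matrix.mul_zero, Matrix.zero_mul, add_zero, zero_add,
        Matrix.mul_assoc, hETx, hFTν, Matrix.mul_one]
    rw [h1, hB, Matrix.smul_mul, Matrix.fromBlocks_multiply]
    simp only [Matrix.smul_mul, Matrix.mul_smul, Matrix.one_mul, smul_smul, Matrix.mul_zero,
      Matrix.zero_mul, add_zero, zero_add, Matrix.mul_assoc, smul_zero]
  rw [hprod, Matrix.trace_smul, trace_fromBlocks, Matrix.trace_smul, Matrix.trace_smul]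
  simp only [smul_eq_mul]
  ring
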